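/- Let a : ℝ → ℝ be continuous and T-periodic with nonzero average. Then there exists a unique T-periodic C¹ function σ : ℝ → ℝ, nowhere vanishing, such that a(t) = σ'(t)/σ(t) - σ(t) for all t ∈ ℝ. Moreover σ has constant sign equal to -sign(ā), where ā is the average of a. -/

import Mathlib

/-- There is a unique T-periodic C¹ nowhere-vanishing σ with a = σ'/σ - σ,
and any such σ has constant sign equal to -sign(ā). -/
theorem stmt_2 (T : ℝ) (hT : 0 < T) (a : ℝ → ℝ) (ha : Continuous a)
    (haper : ∀ t, a (t + T) = a t)
    (abar : ℝ) (habar : abar = (1 / T) * ∫ t in (0:ℝ)..T, a t) (habar0 : abar ≠ 0) :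
    (∃! σ : ℝ → ℝ,
        ContDiff ℝ 1 σ ∧ (∀ t, σ (t + T) = σ t) ∧ (∀ t, σ t ≠ 0) ∧
        (∀ t, a t = deriv σ t / σ t - σ t)) ∧
    (∀ σ : ℝ → ℝ,
        (ContDiff ℝ 1 σ ∧ (∀ t, σ (t + T) = σ t) ∧ (∀ t, σ t ≠ 0) ∧
          (∀ t, a t = deriv σ t / σ t - σ t)) →
        ((0 < abar → ∀ t, σ t < 0) ∧ (abar < 0 → ∀ t, 0 < σ t))) := by
  -- the antiderivative A of a
  set A : ℝ → ℝ := fun t => ∫ s in (0:ℝ)..t, a s with hAdef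
  have hAd : ∀ t, HasDerivAt A (a t) t := fun t =>
    intervalIntegral.integral_hasDerivAt_right (ha.intervalIntegrable _ _)
      ha.aestronglyMeasurable.stronglyMeasurableAtFilter ha.continuousAt
  have hAcont : Continuous A :=
    (Differentiable.continuous fun t => (hAd t).differentiableAt)
  have hApd : ∀ t, A (t + T) = A t + A T := by
    intro t
    have h1 : Function.Periodic a T := haper
    have h2 : (∫ s in t..t+T, a s) = ∫ s in (0:ℝ)..0+T, a s :=
      h1.intervalIntegral_add_eq t 0
    have h3 : A t + (∫ s in t..t+T, a s) = A (t + T) :=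
      intervalIntegral.integral_add_adjacent_intervals
        (ha.intervalIntegrable _ _) (ha.intervalIntegrable _ _)
    simp only [zero_add] at h2
    rw [← h3, h2]
  have hATabar : A T = T * abar := by
    rw [habar, hAdef]
    field_simp
  have hAT0 : A T ≠ 0 := by
    rw [hATabar]
    exact mul_ne_zero (ne_of_gt hT) habar0
  -- the auxiliary integral E
  set E : ℝ → ℝ := fun t => ∫ s in (0:ℝ)..t, Real.exp (A s) with hEdef
  have hexpc : Continuous fun s => Real.exp (A s) := Real.continuous_exp.comp hAcont
  have hEd : ∀ t, HasDerivAt E (Real.exp (A t)) t := fun t =>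
    intervalIntegral.integral_hasDerivAt_right (hexpc.intervalIntegrable _ _)
      hexpc.aestronglyMeasurable.stronglyMeasurableAtFilter hexpc.continuousAt
  have hEcont : Continuous E := (Differentiable.continuous fun t => (hEd t).differentiableAt)
  have hEpd : ∀ t, E (t + T) = E T + Real.exp (A T) * E t := by
    intro t
    have h3 : E T + (∫ s in T..t+T, Real.exp (A s)) = E (t + T) :=
      intervalIntegral.integral_add_adjacent_intervals
        (hexpc.intervalIntegrable _ _) (hexpc.intervalIntegrable _ _)
    have h4 : (∫ s in (0:ℝ)..t, Real.exp (A (s + T))) = ∫ s in (0:ℝ)+T..t+T, Real.exp (A s) :=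
      intervalIntegral.integral_comp_add_right (fun s => Real.exp (A s)) T
    have h5 : (∫ s in (0:ℝ)..t, Real.exp (A (s + T))) = Real.exp (A T) * E t := by
      simp only [hApd, Real.exp_add]
      rw [hEdef]
      rw [← intervalIntegral.integral_const_mul]
      congr 1; ext s; ring
    rw [← h3, ← h5, h4]; simp
  have hET : 0 < E T := by
    rw [hEdef]
    exact intervalIntegral.intervalIntegral_pos_of_pos
      (hexpc.intervalIntegrable _ _) (fun s => Real.exp_pos _) hT
  have hE0le : ∀ t ∈ Set.Icc (0:ℝ) T, 0 ≤ E t ∧ E t ≤ E T := by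
    intro t ht
    constructor
    · exact intervalIntegral.integral_nonneg ht.1 fun u _ => (Real.exp_pos _).le
    · have h3 : E t + (∫ s in t..T, Real.exp (A s)) = E T :=
        intervalIntegral.integral_add_adjacent_intervals
          (hexpc.intervalIntegrable _ _) (hexpc.intervalIntegrable _ _)
      have : 0 ≤ ∫ s in t..T, Real.exp (A s) :=
        intervalIntegral.integral_nonneg ht.2 fun u _ => (Real.exp_pos _).le
      linarith
  -- the periodic solution ζ of ζ' = -aζ - 1
  have h1e : 1 - Real.exp (A T) ≠ 0 := by
    intro h
    have : Real.exp (A T) = 1 := by linarith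
    exact hAT0 (Real.exp_injective (by rw [this, Real.exp_zero]))
  set c : ℝ := E T / (1 - Real.exp (A T)) with hcdef
  set ζ : ℝ → ℝ := fun t => Real.exp (-A t) * (c - E t) with hζdef
  have hexinv : ∀ t : ℝ, Real.exp (-A t) * Real.exp (A t) = 1 := by
    intro t; rw [← Real.exp_add]; simp
  have hζd : ∀ t, HasDerivAt ζ (-(a t) * ζ t - 1) t := by
    intro t
    have h1 : HasDerivAt (fun u => Real.exp (-A u)) (-(a t) * Real.exp (-A t)) t := by
      have := ((hAd t).neg).exp
      simpa [mul_comm] using this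
    have h2 : HasDerivAt (fun u => c - E u) (-(Real.exp (A t))) t := ((hEd t).const_sub c)
    have := h1.mul h2
    refine this.congr_deriv ?_
    simp only [hζdef]
    ring_nf
    nlinarith [hexinv t]
  have hζcont : Continuous ζ :=
    ((Real.continuous_exp.comp hAcont.neg).mul (continuous_const.sub hEcont))
  have hc : Real.exp (-A T) * (c - E T) = c := by
    rw [Real.exp_neg]
    field_simp [hcdef]
    have h := div_mul_cancel₀ (E T) h1e
    rw [← hcdef] at h
    linear_combination h
  have hζpd : ∀ t, ζ (t + T) = ζ t := by
    intro t
    simp only [hζdef, hApd, hEpd]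
    have h1 : Real.exp (-(A t + A T)) = Real.exp (-A t) * Real.exp (-A T) := by
      rw [← Real.exp_add]; ring_nf
    rw [h1]
    linear_combination (Real.exp (-A t)) * hc - (Real.exp (-A t) * E t) * hexinv T
  -- sign of ζ on [0,T], then everywhere
  have hζsgnIcc : ∀ t ∈ Set.Icc (0:ℝ) T, (0 < A T → ζ t < 0) ∧ (A T < 0 → 0 < ζ t) := by
    intro t ht
    obtain ⟨hE1, hE2⟩ := hE0le t ht
    constructor
    · intro hAT
      have he1 : 1 < Real.exp (A T) := by
        rw [← Real.exp_zero]; exact Real.exp_lt_exp.mpr hAT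
      have hcneg : c < 0 := div_neg_of_pos_of_neg hET (by linarith)
      have : c - E t < 0 := by linarith
      exact mul_neg_of_pos_of_neg (Real.exp_pos _) this
    · intro hAT
      have he1 : Real.exp (A T) < 1 := by
        rw [← Real.exp_zero]; exact Real.exp_lt_exp.mpr hAT
      have hcpos : 0 < c := div_pos hET (by linarith)
      have hcET : c - E T = c * Real.exp (A T) := by
        have h2 := hc
        rw [Real.exp_neg] at h2
        field_simp at h2
        linarith [h2]
      have h3 : 0 < c - E T := by
        rw [hcET]; positivity
      have : 0 < c - E t := by linarith
      exact mul_pos (Real.exp_pos _) this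
  have hζper : Function.Periodic ζ T := hζpd
  have hζsgn : ∀ t, (0 < A T → ζ t < 0) ∧ (A T < 0 → 0 < ζ t) := by
    intro t
    obtain ⟨y, hy, hxy⟩ := hζper.exists_mem_Ico₀ hT t
    rw [hxy]
    exact hζsgnIcc y ⟨hy.1, hy.2.le⟩
  have hζ0 : ∀ t, ζ t ≠ 0 := by
    intro t
    rcases hAT0.lt_or_gt with h | h
    · exact ne_of_gt ((hζsgn t).2 h)
    · exact ne_of_lt ((hζsgn t).1 h)
  -- ζ is C¹
  have hζdiff : Differentiable ℝ ζ := fun t => (hζd t).differentiableAt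
  have hζderiv : deriv ζ = fun t => -(a t) * ζ t - 1 := funext fun t => (hζd t).deriv
  have hζC1 : ContDiff ℝ 1 ζ := by
    rw [contDiff_one_iff_deriv]
    exact ⟨hζdiff, by rw [hζderiv]; exact ((ha.neg.mul hζcont).sub continuous_const)⟩
  -- the solution σ
  set σ : ℝ → ℝ := fun t => (ζ t)⁻¹ with hσdef
  have hσC1 : ContDiff ℝ 1 σ := hζC1.inv hζ0
  have hσpd : ∀ t, σ (t + T) = σ t := fun t => by simp only [hσdef, hζpd]
  have hσ0 : ∀ t, σ t ≠ 0 := fun t => inv_ne_zero (hζ0 t)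
  have hσd : ∀ t, HasDerivAt σ (-(-(a t) * ζ t - 1) / (ζ t) ^ 2) t := fun t =>
    (hζd t).inv (hζ0 t)
  have hσeq : ∀ t, a t = deriv σ t / σ t - σ t := by
    intro t
    rw [(hσd t).deriv, hσdef]
    have h0 := hζ0 t
    field_simp
    ring
  -- uniqueness: any solution τ equals σ
  have huniq : ∀ τ : ℝ → ℝ,
      (ContDiff ℝ 1 τ ∧ (∀ t, τ (t + T) = τ t) ∧ (∀ t, τ t ≠ 0) ∧
        (∀ t, a t = deriv τ t / τ t - τ t)) → τ = σ := by
    rintro τ ⟨hτC1, hτpd, hτ0, hτeq⟩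
    set η : ℝ → ℝ := fun t => (τ t)⁻¹ with hηdef
    have hτd : ∀ t, HasDerivAt τ (deriv τ t) t := fun t =>
      ((hτC1.differentiable one_ne_zero) t).hasDerivAt
    have hηd : ∀ t, HasDerivAt η (-(a t) * η t - 1) t := by
      intro t
      have h1 := (hτd t).inv (hτ0 t)
      have h2 : deriv τ t = (a t + τ t) * τ t := by
        have h := hτeq t
        have h0 := hτ0 t
        field_simp at h
        linear_combination -h
      refine h1.congr_deriv ?_
      rw [h2, hηdef]
      have h0 := hτ0 t
      field_simp
      ring
    -- w = η - ζ satisfies w' = -a w; g = w * exp(A) is constant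
    set w : ℝ → ℝ := fun t => η t - ζ t with hwdef
    have hwd : ∀ t, HasDerivAt w (-(a t) * w t) t := by
      intro t
      have := (hηd t).sub (hζd t)
      refine this.congr_deriv ?_
      simp only [hwdef]; ring
    set g : ℝ → ℝ := fun t => w t * Real.exp (A t) with hgdef
    have hgd : ∀ t, HasDerivAt g 0 t := by
      intro t
      have := (hwd t).mul ((hAd t).exp)
      refine this.congr_deriv ?_
      ring
    have hgconst : ∀ t, g t = g 0 := by
      intro t
      exact is_const_of_deriv_eq_zero (fun s => (hgd s).differentiableAt)
        (fun s => (hgd s).deriv) t 0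
    have hA0 : A 0 = 0 := by simp [hAdef]
    have hg0 : g 0 = w 0 := by simp [hgdef, hA0]
    have hw : ∀ t, w t = w 0 * Real.exp (-A t) := by
      intro t
      have h1 := hgconst t
      rw [hg0] at h1
      have h2 : w t * Real.exp (A t) = w 0 := h1
      rw [Real.exp_neg]
      exact (eq_mul_inv_iff_mul_eq₀ (Real.exp_ne_zero _)).mpr h2
    have hw0 : w 0 = 0 := by
      have h1 : w (0 + T) = w 0 := by
        simp only [hwdef, hηdef, hτpd, hζpd]
      rw [hw (0 + T), zero_add] at h1
      by_contra h
      have h2 : Real.exp (-A T) = 1 :=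
        mul_left_cancel₀ h (h1.trans (mul_one (w 0)).symm)
      have h3 := Real.exp_injective (by rw [h2, Real.exp_zero] : Real.exp (-A T) = Real.exp 0)
      simp only [neg_eq_zero] at h3
      exact hAT0 h3
    have hweq : ∀ t, w t = 0 := by
      intro t; rw [hw t, hw0, zero_mul]
    funext t
    have h1 : η t = ζ t := by have := hweq t; simp only [hwdef] at this; linarith
    have h2 : τ t = (η t)⁻¹ := by rw [hηdef]; simp [inv_inv]
    rw [h2, h1, hσdef]
  refine ⟨⟨σ, ⟨hσC1, hσpd, hσ0, hσeq⟩, huniq⟩, ?_⟩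
  intro τ hτ
  have hτσ : τ = σ := huniq τ hτ
  subst hτσ
  constructor
  · intro habarpos t
    have hAT : 0 < A T := by rw [hATabar]; positivity
    have := (hζsgn t).1 hAT
    simp only [hσdef]
    exact inv_neg''.mpr this
  · intro habarneg t
    have hAT : A T < 0 := by
      rw [hATabar]; exact mul_neg_of_pos_of_neg hT habarneg
    have := (hζsgn t).2 hAT
    simp only [hσdef]
    exact inv_pos.mpr this
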